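/- Second-order accuracy of the one-sided difference at the midpoint: if φ ∈ H³(ℝ), then Σ_{i∈ℤ} |(φ(x_{i+1}) − φ(x_i))/Δx − φ'(x_{i+1/2})|² Δx ≤ (Δx⁴/320) ‖φ'''‖²_{L²(ℝ)}, where x_i = iΔx and x_{i+1/2} = (i+1/2)Δx. -/

import Mathlib

open MeasureTheory

open Set intervalIntegral


/-- Elementary Cauchy–Schwarz for integrals. -/
lemma cs_integral {μ : Measure ℝ} (f g : ℝ → ℝ)
    (hf : Integrable (fun x => f x ^ 2) μ) (hg : Integrable (fun x => g x ^ 2) μ)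
    (hfg : Integrable (fun x => f x * g x) μ) :
    (∫ x, f x * g x ∂μ) ^ 2 ≤ (∫ x, f x ^ 2 ∂μ) * ∫ x, g x ^ 2 ∂μ := by
  set A := ∫ x, f x ^ 2 ∂μ with hA
  set B := ∫ x, f x * g x ∂μ with hB
  set C := ∫ x, g x ^ 2 ∂μ with hC
  have hA0 : 0 ≤ A := integral_nonneg fun x => sq_nonneg _
  have hC0 : 0 ≤ C := integral_nonneg fun x => sq_nonneg _
  rcases eq_or_lt_of_le hC0 with hC0' | hC0'
  · have hg0 : (fun x => g x ^ 2) =ᵐ[μ] 0 := by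
      rw [← integral_eq_zero_iff_of_nonneg (fun x => sq_nonneg (g x)) hg]
      exact hC0'.symm
    have hfg0 : (fun x => f x * g x) =ᵐ[μ] 0 := by
      filter_upwards [hg0] with x hx
      have : g x = 0 := by
        have := hx
        simp only [Pi.zero_apply] at this
        exact pow_eq_zero_iff (n := 2) (by norm_num) |>.mp this
      simp [this]
    have hB0 : B = 0 := by
      rw [hB, integral_congr_ae hfg0]; simp
    rw [hB0, ← hC0']
    simp [hA0]
  · set lam := B / C with hlam
    have key : 0 ≤ A - 2 * lam * B + lam ^ 2 * C := by
      have h2 : 0 ≤ ∫ x, (f x - lam * g x) ^ 2 ∂μ := integral_nonneg fun x => sq_nonneg _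
      have hsub : Integrable (fun x => f x ^ 2 - 2 * lam * (f x * g x)) μ :=
        hf.sub (hfg.const_mul _)
      calc (0:ℝ) ≤ ∫ x, (f x - lam * g x) ^ 2 ∂μ := h2
        _ = ∫ x, (f x ^ 2 - 2 * lam * (f x * g x) + lam ^ 2 * g x ^ 2) ∂μ := by
            congr 1; ext x; ring
        _ = (∫ x, (f x ^ 2 - 2 * lam * (f x * g x)) ∂μ) + ∫ x, lam ^ 2 * g x ^ 2 ∂μ :=
            integral_add hsub (hg.const_mul _)
        _ = A - 2 * lam * B + lam ^ 2 * C := by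
            rw [integral_sub hf (hfg.const_mul _), MeasureTheory.integral_const_mul, MeasureTheory.integral_const_mul]
    have h3 : 0 ≤ A - B ^ 2 / C := by
      have h4 : lam ^ 2 * C = B ^ 2 / C := by
        rw [hlam]; field_simp
      have h5 : 2 * lam * B = 2 * (B ^ 2 / C) := by
        rw [hlam]; field_simp
      nlinarith [key, h4, h5]
    rw [sub_nonneg] at h3
    exact (div_le_iff₀ hC0').mp h3


lemma ftc3 (φ φ' φ'' φ''' : ℝ → ℝ)
    (hd1 : ∀ x : ℝ, HasDerivAt φ (φ' x) x)
    (hd2 : ∀ x : ℝ, HasDerivAt φ' (φ'' x) x)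
    (hd3 : ∀ x : ℝ, HasDerivAt φ'' (φ''' x) x)
    (c u v : ℝ) (hint : IntervalIntegrable φ''' volume u v) :
    ∫ s in u..v, (c - s) ^ 2 / 2 * φ''' s
      = ((c - v) ^ 2 / 2 * φ'' v + (c - v) * φ' v + φ v)
        - ((c - u) ^ 2 / 2 * φ'' u + (c - u) * φ' u + φ u) := by
  have hF : ∀ s : ℝ, HasDerivAt
      (fun t => (c - t) ^ 2 / 2 * φ'' t + (c - t) * φ' t + φ t)
      ((c - s) ^ 2 / 2 * φ''' s) s := by
    intro s
    have hlin : HasDerivAt (fun t : ℝ => c - t) (-1) s := (hasDerivAt_id s).const_sub c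
    have h1 : HasDerivAt (fun t : ℝ => (c - t) ^ 2 / 2) (-(c - s)) s := by
      have := (hlin.pow 2).div_const 2
      exact this.congr_deriv (by rw [show (2:ℕ) - 1 = 1 from rfl]; ring)
    have H := ((h1.mul (hd3 s)).add (hlin.mul (hd2 s))).add (hd1 s)
    exact H.congr_deriv (by ring)
  have hK : IntervalIntegrable (fun s => (c - s) ^ 2 / 2 * φ''' s) volume u v := by
    apply hint.continuousOn_mul
    · exact (((continuous_const.sub continuous_id).pow 2).div_const 2).continuousOn
  exact integral_eq_sub_of_hasDerivAt (fun s _ => hF s) hK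

lemma step (Δx : ℝ) (hΔx : 0 < Δx) (φ φ' φ'' φ''' : ℝ → ℝ)
    (hd1 : ∀ x : ℝ, HasDerivAt φ (φ' x) x)
    (hd2 : ∀ x : ℝ, HasDerivAt φ' (φ'' x) x)
    (hd3 : ∀ x : ℝ, HasDerivAt φ'' (φ''' x) x)
    (h3 : MemLp φ''' 2 volume) (a : ℝ) :
    ((φ (a + Δx) - φ a) / Δx - φ' (a + Δx / 2)) ^ 2 * Δx
      ≤ (Δx ^ 4 / 320) * ∫ x in Ioc a (a + Δx), φ''' x ^ 2 := by
  set m := a + Δx / 2 with hm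
  set b := a + Δx with hb
  have ham : a ≤ m := by rw [hm]; linarith
  have hmb : m ≤ b := by rw [hm, hb]; linarith
  have hab : a ≤ b := ham.trans hmb
  -- interval integrability of φ'''
  have hInt : ∀ u v : ℝ, IntervalIntegrable φ''' volume u v := by
    intro u v
    rw [intervalIntegrable_iff]
    haveI : IsFiniteMeasure (volume.restrict (Set.uIoc u v)) := by
      rw [uIoc]; infer_instance
    exact (h3.restrict _).integrable one_le_two
  have hsqInt : Integrable (fun x => φ''' x ^ 2) volume := h3.integrable_sq
  -- kernels
  have hker1 : Continuous fun s : ℝ => (a - s) ^ 2 / 2 :=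
    ((continuous_const.sub continuous_id).pow 2).div_const 2
  have hker2 : Continuous fun s : ℝ => (b - s) ^ 2 / 2 :=
    ((continuous_const.sub continuous_id).pow 2).div_const 2
  set R₁ := ∫ s in a..m, (a - s) ^ 2 / 2 * φ''' s with hR₁def
  set R₂ := ∫ s in m..b, (b - s) ^ 2 / 2 * φ''' s with hR₂def
  have hR1 := ftc3 φ φ' φ'' φ''' hd1 hd2 hd3 a a m (hInt a m)
  have hR2 := ftc3 φ φ' φ'' φ''' hd1 hd2 hd3 b m b (hInt m b)
  have hsum : R₁ + R₂ = φ b - φ a - Δx * φ' m := by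
    rw [hR₁def, hR₂def, hR1, hR2, hm, hb]; ring
  -- Cauchy–Schwarz on each half
  have hfg1 : IntegrableOn (fun s => (a - s) ^ 2 / 2 * φ''' s) (Ioc a m) volume :=
    ((hInt a m).continuousOn_mul hker1.continuousOn).1
  have hfg2 : IntegrableOn (fun s => (b - s) ^ 2 / 2 * φ''' s) (Ioc m b) volume :=
    ((hInt m b).continuousOn_mul hker2.continuousOn).1
  have cs1 := cs_integral (μ := volume.restrict (Ioc a m)) (fun s => (a - s) ^ 2 / 2) φ'''
    ((hker1.pow 2).integrableOn_Ioc) hsqInt.integrableOn hfg1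
  have cs2 := cs_integral (μ := volume.restrict (Ioc m b)) (fun s => (b - s) ^ 2 / 2) φ'''
    ((hker2.pow 2).integrableOn_Ioc) hsqInt.integrableOn hfg2
  -- kernel L² norms
  have hpoly : ∀ c u v : ℝ, ∫ s in u..v, ((c - s) ^ 2 / 2) ^ 2
      = ((v - c) ^ 5 - (u - c) ^ 5) / 20 := by
    intro c u v
    have h1 : ∀ s : ℝ, ((c - s) ^ 2 / 2) ^ 2 = (fun y : ℝ => y ^ 4 / 4) (s - c) := by
      intro s; simp only; ring
    rw [intervalIntegral.integral_congr (fun s _ => h1 s),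
      intervalIntegral.integral_comp_sub_right (fun y : ℝ => y ^ 4 / 4) c]
    simp_rw [div_eq_mul_inv]
    rw [intervalIntegral.integral_mul_const, integral_pow]
    norm_num
    ring
  have hJ1 : ∫ s in Ioc a m, ((a - s) ^ 2 / 2) ^ 2 = (Δx / 2) ^ 5 / 20 := by
    rw [← intervalIntegral.integral_of_le ham, hpoly]
    rw [hm]; ring_nf
  have hJ2 : ∫ s in Ioc m b, ((b - s) ^ 2 / 2) ^ 2 = (Δx / 2) ^ 5 / 20 := by
    rw [← intervalIntegral.integral_of_le hmb, hpoly]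
    rw [hm, hb]; ring_nf
  rw [hJ1] at cs1
  rw [hJ2] at cs2
  -- splitting the integral of φ'''²
  set I₁ := ∫ x in Ioc a m, φ''' x ^ 2 with hI₁def
  set I₂ := ∫ x in Ioc m b, φ''' x ^ 2 with hI₂def
  have hI1nn : 0 ≤ I₁ := integral_nonneg fun x => sq_nonneg _
  have hI2nn : 0 ≤ I₂ := integral_nonneg fun x => sq_nonneg _
  have hIsplit : ∫ x in Ioc a b, φ''' x ^ 2 = I₁ + I₂ := by
    rw [← intervalIntegral.integral_of_le hab, hI₁def, hI₂def,
      ← intervalIntegral.integral_of_le ham, ← intervalIntegral.integral_of_le hmb,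
      intervalIntegral.integral_add_adjacent_intervals
        hsqInt.intervalIntegrable hsqInt.intervalIntegrable]
  -- CS results with interval integrals rewritten back
  have hcs1 : R₁ ^ 2 ≤ (Δx / 2) ^ 5 / 20 * I₁ := by
    rw [hR₁def, intervalIntegral.integral_of_le ham]; simpa using cs1
  have hcs2 : R₂ ^ 2 ≤ (Δx / 2) ^ 5 / 20 * I₂ := by
    rw [hR₂def, intervalIntegral.integral_of_le hmb]; simpa using cs2
  -- final arithmetic
  have hE : (φ (a + Δx) - φ a) / Δx - φ' (a + Δx / 2) = (R₁ + R₂) / Δx := by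
    rw [← hm, ← hb, hsum]; field_simp
  rw [hE, hIsplit, div_pow]
  rw [div_mul_eq_mul_div, div_le_iff₀ (by positivity : (0:ℝ) < Δx ^ 2)]
  nlinarith [sq_nonneg (R₁ - R₂), hcs1, hcs2, hΔx, sq_nonneg Δx,
    mul_pos hΔx hΔx, pow_pos hΔx 3, pow_pos hΔx 5]

/-- for φ ∈ H³(ℝ) (φ, φ', φ'' continuously differentiable with
φ''' ∈ L²(ℝ)), the one-sided difference quotient is second-order accurate at the
midpoint: Σ_i |(φ(x_{i+1}) − φ(x_i))/Δx − φ'(x_{i+1/2})|² Δx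
  ≤ (Δx⁴/320)‖φ'''‖²_{L²(ℝ)}, with x_i = iΔx, x_{i+1/2} = (i+1/2)Δx. -/
theorem midpoint_difference_second_order
    (Δx : ℝ) (hΔx : 0 < Δx)
    (φ φ' φ'' φ''' : ℝ → ℝ)
    (hd1 : ∀ x : ℝ, HasDerivAt φ (φ' x) x)
    (hd2 : ∀ x : ℝ, HasDerivAt φ' (φ'' x) x)
    (hd3 : ∀ x : ℝ, HasDerivAt φ'' (φ''' x) x)
    (h3 : MemLp φ''' 2 volume) :
    ∑' i : ℤ, |(φ ((i + 1) * Δx) - φ (i * Δx)) / Δx - φ' ((i + 1 / 2) * Δx)| ^ 2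
        * Δx
      ≤ (Δx ^ 4 / 320) * ∫ x : ℝ, (φ''' x) ^ 2 := by
  set s : ℤ → Set ℝ := fun i => Ioc (i * Δx) ((i : ℝ) * Δx + Δx) with hs
  have hmeas : ∀ i : ℤ, MeasurableSet (s i) := fun i => measurableSet_Ioc
  have hdisj : Pairwise (Function.onFun Disjoint s) := by
    intro i j hij
    simp only [Function.onFun, hs, Set.disjoint_left]
    intro x hxi hxj
    have h1 : (i : ℝ) * Δx < (j : ℝ) * Δx + Δx := lt_of_lt_of_le hxi.1 hxj.2
    have h2 : (j : ℝ) * Δx < (i : ℝ) * Δx + Δx := lt_of_lt_of_le hxj.1 hxi.2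
    have hij1 : (i : ℝ) < j + 1 := by
      have := (mul_lt_mul_iff_of_pos_right hΔx).mp (by linarith : (i : ℝ) * Δx < ((j : ℝ) + 1) * Δx)
      exact this
    have hij2 : (j : ℝ) < i + 1 := by
      have := (mul_lt_mul_iff_of_pos_right hΔx).mp (by linarith : (j : ℝ) * Δx < ((i : ℝ) + 1) * Δx)
      exact this
    have : i = j := by
      have a1 : i ≤ j := by exact_mod_cast Int.lt_add_one_iff.mp (by exact_mod_cast hij1)
      have a2 : j ≤ i := by exact_mod_cast Int.lt_add_one_iff.mp (by exact_mod_cast hij2)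
      omega
    exact hij this
  have hunion : (⋃ i : ℤ, s i) = univ := by
    rw [eq_univ_iff_forall]
    intro x
    rw [mem_iUnion]
    refine ⟨⌈x / Δx⌉ - 1, ?_, ?_⟩
    · push_cast
      have h1 : (⌈x / Δx⌉ : ℝ) - 1 < x / Δx := by linarith [Int.ceil_lt_add_one (x / Δx)]
      have h2 : ((⌈x / Δx⌉ : ℝ) - 1) * Δx < x := by
        rw [← lt_div_iff₀ hΔx] at *
        exact h1
      nlinarith [h2]
    · push_cast
      have h2 : x ≤ (⌈x / Δx⌉ : ℝ) * Δx := (div_le_iff₀ hΔx).mp (Int.le_ceil (x / Δx))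
      nlinarith [h2]
  have hsqInt : Integrable (fun x => φ''' x ^ 2) volume := h3.integrable_sq
  have hHasSum : HasSum (fun i : ℤ => ∫ x in s i, φ''' x ^ 2) (∫ x : ℝ, φ''' x ^ 2) := by
    have := hasSum_integral_iUnion hmeas hdisj
      (f := fun x => φ''' x ^ 2) (hsqInt.integrableOn)
    rwa [hunion, setIntegral_univ] at this
  have hg : HasSum (fun i : ℤ => (Δx ^ 4 / 320) * ∫ x in s i, φ''' x ^ 2)
      ((Δx ^ 4 / 320) * ∫ x : ℝ, φ''' x ^ 2) := hHasSum.mul_left _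
  have hterm : ∀ i : ℤ,
      |(φ ((i + 1) * Δx) - φ (i * Δx)) / Δx - φ' ((i + 1 / 2) * Δx)| ^ 2 * Δx
        ≤ (Δx ^ 4 / 320) * ∫ x in s i, φ''' x ^ 2 := by
    intro i
    have h := step Δx hΔx φ φ' φ'' φ''' hd1 hd2 hd3 h3 ((i : ℝ) * Δx)
    have e1 : ((i : ℝ) + 1) * Δx = (i : ℝ) * Δx + Δx := by ring
    have e2 : ((i : ℝ) + 1 / 2) * Δx = (i : ℝ) * Δx + Δx / 2 := by ring
    rw [e1, e2, sq_abs]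
    exact h
  have hnn : ∀ i : ℤ,
      0 ≤ |(φ ((i + 1) * Δx) - φ (i * Δx)) / Δx - φ' ((i + 1 / 2) * Δx)| ^ 2 * Δx :=
    fun i => mul_nonneg (sq_nonneg _) hΔx.le
  have hsummable : Summable (fun i : ℤ =>
      |(φ ((i + 1) * Δx) - φ (i * Δx)) / Δx - φ' ((i + 1 / 2) * Δx)| ^ 2 * Δx) :=
    Summable.of_nonneg_of_le hnn hterm hg.summable
  calc ∑' i : ℤ, |(φ ((i + 1) * Δx) - φ (i * Δx)) / Δx - φ' ((i + 1 / 2) * Δx)| ^ 2 * Δx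
      ≤ ∑' i : ℤ, (Δx ^ 4 / 320) * ∫ x in s i, φ''' x ^ 2 :=
        Summable.tsum_le_tsum hterm hsummable hg.summable
    _ = (Δx ^ 4 / 320) * ∫ x : ℝ, φ''' x ^ 2 := hg.tsum_eq
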